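/- arXiv:math/0406457 — 4 statements merged into one kernel-verified Lean document; each statement's English description precedes it below -/
import Mathlib

section
/- Let g ≥ 1, let ξ ∈ ℂ with ξ ≠ 0, and let α_1, …, α_g ∈ ℂ satisfy (∑_{i=1}^g α_i ξ^i)² = ξ⁻¹. Define Φ_0 : ℝ^g → ℂ by Φ_0(t_1, …, t_g) = exp(∑_{1 ≤ k ≤ i ≤ g} α_i · t_k · ξ^{i−k+1}). Then ∂_x²Φ_0 = ξ⁻¹·Φ_0 and ∂_x²∂_kΦ_0 − ∂_{k+1}Φ_0 = α_k·Φ_0 for every k = 1, …, g (with ∂_{g+1} ≡ 0). That is, Φ_0 is a common eigenfunction of the operators 𝓛 = ∂_x² and 𝓤_k = ∂_x²∂_k − ∂_{k+1} (the operators of the family with u_1 = … = u_g ≡ 0) with eigenvalues ξ⁻¹, α_1, …, α_g. -/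
open scoped BigOperators

/-- Partial derivative `∂_i` (1-based index) on functions of `t : Fin g → ℝ`;
`∂_i ≡ 0` for `i = 0` or `i > g` (in particular `∂_{g+1} ≡ 0`). -/
noncomputable def pd {g : ℕ} {E : Type*} [NormedAddCommGroup E] [NormedSpace ℝ E]
    (i : ℕ) (f : (Fin g → ℝ) → E) : (Fin g → ℝ) → E :=
  fun t => if h : 1 ≤ i ∧ i ≤ g then
    fderiv ℝ f t (Pi.single (⟨i - 1, by omega⟩ : Fin g) 1) else 0

/-- The coordinate `t_k` (1-based); `0` for `k = 0` or `k > g`. -/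
noncomputable def coord (g : ℕ) (k : ℕ) (t : Fin g → ℝ) : ℝ :=
  if h : 1 ≤ k ∧ k ≤ g then t ⟨k - 1, by omega⟩ else 0

/-- `Φ_0(t) = exp(∑_{1 ≤ k ≤ i ≤ g} α_i t_k ξ^{i−k+1})`. -/
noncomputable def Phi0 (g : ℕ) (ξ : ℂ) (α : ℕ → ℂ) : (Fin g → ℝ) → ℂ :=
  fun t => Complex.exp (∑ i ∈ Finset.Icc 1 g, ∑ k ∈ Finset.Icc 1 i,
    α i * (coord g k t : ℂ) * ξ ^ (i - k + 1))

/-- Eigenvalue coefficients: `c_k = ∑_{i=k}^g α_i ξ^{i-k+1}`. -/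
noncomputable def cc (g : ℕ) (ξ : ℂ) (α : ℕ → ℂ) (k : ℕ) : ℂ :=
  ∑ i ∈ Finset.Icc k g, α i * ξ ^ (i - k + 1)

/-- The exponent of `Φ_0` as a continuous linear map. -/
noncomputable def ell (g : ℕ) (ξ : ℂ) (α : ℕ → ℂ) : (Fin g → ℝ) →L[ℝ] ℂ :=
  ∑ j : Fin g, cc g ξ α (j.1+1) • ((Complex.ofRealCLM).comp (ContinuousLinearMap.proj j))

lemma ell_single (g : ℕ) (ξ : ℂ) (α : ℕ → ℂ) (j : Fin g) :
    ell g ξ α (Pi.single j 1) = cc g ξ α (j.1+1) := by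
  simp only [ell, ContinuousLinearMap.sum_apply, ContinuousLinearMap.smul_apply,
    ContinuousLinearMap.coe_comp', Function.comp_apply, ContinuousLinearMap.proj_apply]
  rw [Finset.sum_eq_single j]
  · simp
  · intro b _ hb; simp [Pi.single_eq_of_ne hb]
  · simp

lemma Phi0_eq (g : ℕ) (ξ : ℂ) (α : ℕ → ℂ) (t : Fin g → ℝ) :
    Phi0 g ξ α t = Complex.exp (ell g ξ α t) := by
  have swap : ∑ i ∈ Finset.Icc 1 g, ∑ k ∈ Finset.Icc 1 i,
      α i * ((coord g k t : ℝ) : ℂ) * ξ ^ (i - k + 1)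
      = ∑ k ∈ Finset.Icc 1 g, ∑ i ∈ Finset.Icc k g,
      α i * ((coord g k t : ℝ) : ℂ) * ξ ^ (i - k + 1) := by
    rw [Finset.sum_comm']
    intro i k
    simp only [Finset.mem_Icc]
    omega
  rw [Phi0, swap]
  congr 1
  have hc : ∀ k ∈ Finset.Icc 1 g, (∑ i ∈ Finset.Icc k g,
      α i * ((coord g k t : ℝ) : ℂ) * ξ ^ (i - k + 1))
      = cc g ξ α k * ((coord g k t : ℝ) : ℂ) := by
    intro k hk
    rw [cc, Finset.sum_mul]
    exact Finset.sum_congr rfl (by intro i _; ring)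
  rw [Finset.sum_congr rfl hc]
  simp only [ell, ContinuousLinearMap.sum_apply, ContinuousLinearMap.smul_apply,
    ContinuousLinearMap.coe_comp', Function.comp_apply, ContinuousLinearMap.proj_apply,
    Complex.ofRealCLM_apply, smul_eq_mul]
  set F : ℕ → ℂ := fun k => cc g ξ α k * ((coord g k t : ℝ) : ℂ) with hF
  have h1 : ∑ k ∈ Finset.Icc 1 g, F k = ∑ i ∈ Finset.range g, F (1 + i) := by
    rw [show Finset.Icc 1 g = Finset.Ico 1 (g+1) by rfl, Finset.sum_Ico_eq_sum_range]
    norm_num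
  have h2 : ∑ x : Fin g, cc g ξ α (x.1 + 1) * (t x : ℂ) = ∑ x : Fin g, F (1 + x.1) := by
    refine Finset.sum_congr rfl ?_
    intro x _
    have hx : 1 ≤ 1 + x.1 ∧ 1 + x.1 ≤ g := ⟨by omega, by omega⟩
    rw [hF]
    simp only [coord, dif_pos hx]
    have : (⟨1 + x.1 - 1, by omega⟩ : Fin g) = x := by ext; simp
    rw [this]
    ring_nf
  rw [h1, h2, Fin.sum_univ_eq_sum_range (fun i => F (1 + i))]

lemma pd_mul_Phi0 (g : ℕ) (ξ : ℂ) (α : ℕ → ℂ) (a : ℂ) (t : Fin g → ℝ) (k : ℕ)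
    (hk1 : 1 ≤ k) (hk2 : k ≤ g) :
    pd k (fun t => a * Phi0 g ξ α t) t = a * cc g ξ α k * Phi0 g ξ α t := by
  have hfun : (fun t => a * Phi0 g ξ α t) = fun t => a * Complex.exp (ell g ξ α t) := by
    funext s; rw [Phi0_eq]
  have hd : HasFDerivAt (fun t => a * Complex.exp (ell g ξ α t))
      ((a * Complex.exp (ell g ξ α t)) • (ell g ξ α : (Fin g → ℝ) →L[ℝ] ℂ)) t := by
    have h1 := (ell g ξ α).hasFDerivAt (x := t)
    have h2 := ((Complex.hasDerivAt_exp (ell g ξ α t)).hasFDerivAt).restrictScalars ℝ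
    have h3 := (h2.comp t h1).const_mul a
    refine h3.congr_fderiv ?_
    ext v
    simp [ContinuousLinearMap.smulRight_apply]
    ring
  rw [pd, hfun, dif_pos ⟨hk1, hk2⟩, hd.fderiv]
  simp only [ContinuousLinearMap.smul_apply, smul_eq_mul]
  have h4 : ell g ξ α (Pi.single (⟨k - 1, by omega⟩ : Fin g) 1) = cc g ξ α k := by
    have := ell_single g ξ α ⟨k - 1, by omega⟩
    simpa [Nat.sub_add_cancel hk1] using this
  rw [h4, Phi0_eq]; ring

lemma cc_recur (g : ℕ) (ξ : ℂ) (α : ℕ → ℂ) (hξ : ξ ≠ 0) (k : ℕ) (hk1 : 1 ≤ k) (hk2 : k ≤ g) :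
    ξ⁻¹ * cc g ξ α k = α k + cc g ξ α (k + 1) := by
  have hins : Finset.Icc k g = insert k (Finset.Icc (k+1) g) := by
    ext x; simp only [Finset.mem_Icc, Finset.mem_insert]; omega
  have hnm : k ∉ Finset.Icc (k+1) g := by simp
  rw [cc, hins, Finset.sum_insert hnm]
  have : ∀ i ∈ Finset.Icc (k+1) g, α i * ξ ^ (i - k + 1) = ξ * (α i * ξ ^ (i - (k+1) + 1)) := by
    intro i hi
    rw [Finset.mem_Icc] at hi
    have : i - k + 1 = (i - (k+1) + 1) + 1 := by omega
    rw [this, pow_succ]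
    ring
  rw [Finset.sum_congr rfl this, ← Finset.mul_sum, ← cc]
  have hk : k - k + 1 = 1 := by omega
  rw [hk, pow_one]
  field_simp

/-- If `(∑_{i=1}^g α_i ξ^i)² = ξ⁻¹` (`ξ ≠ 0`), then
`Φ_0 = exp(∑_{1 ≤ k ≤ i ≤ g} α_i t_k ξ^{i−k+1})` satisfies `∂_x²Φ_0 = ξ⁻¹·Φ_0` and
`∂_x²∂_kΦ_0 − ∂_{k+1}Φ_0 = α_k·Φ_0` for every `k = 1, …, g` (with `∂_{g+1} ≡ 0`);
i.e. `Φ_0` is a common eigenfunction of `𝓛 = ∂_x²` and `𝓤_k = ∂_x²∂_k − ∂_{k+1}`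
(the family with `u_1 = … = u_g ≡ 0`) with eigenvalues `ξ⁻¹, α_1, …, α_g`. -/
theorem statement10 (g : ℕ) (hg : 1 ≤ g) (ξ : ℂ) (hξ : ξ ≠ 0) (α : ℕ → ℂ)
    (hα : (∑ i ∈ Finset.Icc 1 g, α i * ξ ^ i) ^ 2 = ξ⁻¹) :
    (∀ t, pd 1 (pd 1 (Phi0 g ξ α)) t = ξ⁻¹ * Phi0 g ξ α t)
    ∧ (∀ k, 1 ≤ k → k ≤ g → ∀ t,
        pd 1 (pd 1 (pd k (Phi0 g ξ α))) t - pd (k+1) (Phi0 g ξ α) t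
          = α k * Phi0 g ξ α t) := by
  have hc1 : cc g ξ α 1 ^ 2 = ξ⁻¹ := by
    rw [← hα, cc]
    congr 1
    refine Finset.sum_congr rfl ?_
    intro i hi
    rw [Finset.mem_Icc] at hi
    have : i - 1 + 1 = i := by omega
    rw [this]
  -- pd of Phi0 itself
  have hPhi : ∀ k, 1 ≤ k → k ≤ g → pd k (Phi0 g ξ α) = fun t => cc g ξ α k * Phi0 g ξ α t := by
    intro k hk1 hk2
    funext t
    have := pd_mul_Phi0 g ξ α 1 t k hk1 hk2
    simpa using this
  constructor
  · intro t
    rw [hPhi 1 le_rfl hg]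
    rw [pd_mul_Phi0 g ξ α (cc g ξ α 1) t 1 le_rfl hg, ← hc1]
    ring
  · intro k hk1 hk2 t
    have hstep : pd 1 (pd 1 (pd k (Phi0 g ξ α))) t
        = cc g ξ α 1 * cc g ξ α 1 * cc g ξ α k * Phi0 g ξ α t := by
      rw [hPhi k hk1 hk2]
      have h1 : pd 1 (fun t => cc g ξ α k * Phi0 g ξ α t)
          = fun t => cc g ξ α k * cc g ξ α 1 * Phi0 g ξ α t := by
        funext s; exact pd_mul_Phi0 g ξ α (cc g ξ α k) s 1 le_rfl hg
      rw [h1]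
      rw [pd_mul_Phi0 g ξ α (cc g ξ α k * cc g ξ α 1) t 1 le_rfl hg]
      ring
    have hnext : pd (k+1) (Phi0 g ξ α) t = cc g ξ α (k+1) * Phi0 g ξ α t := by
      rcases lt_or_eq_of_le hk2 with h | h
      · rw [hPhi (k+1) (by omega) (by omega)]
      · have h0 : ¬ (1 ≤ k + 1 ∧ k + 1 ≤ g) := by omega
        rw [pd, dif_neg h0]
        have : cc g ξ α (k+1) = 0 := by
          rw [cc]
          have : Finset.Icc (k+1) g = ∅ := by
            apply Finset.Icc_eq_empty; omega
          rw [this, Finset.sum_empty]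
        rw [this, zero_mul]
    rw [hstep, hnext]
    have hrec := cc_recur g ξ α hξ k hk1 hk2
    have hsq : cc g ξ α 1 * cc g ξ α 1 = ξ⁻¹ := by rw [← hc1]; ring
    rw [hsq]
    have : ξ⁻¹ * cc g ξ α k * Phi0 g ξ α t - cc g ξ α (k+1) * Phi0 g ξ α t
        = (ξ⁻¹ * cc g ξ α k - cc g ξ α (k+1)) * Phi0 g ξ α t := by ring
    rw [this, hrec]
    ring
end

section
/- Let E, α_1, …, α_g and γ_2, …, γ_g be complex constants, and set γ_1 := 0 and γ_{g+1} := 0. If Φ : ℝ^g → ℂ is smooth and satisfies 𝓛Φ = E·Φ and 𝓤_kΦ = α_k·Φ for all k = 1, …, g, then the function Φ̃ := Φ · exp(γ_2 t_2 + … + γ_g t_g) satisfies 𝓛Φ̃ = E·Φ̃ and 𝓤_kΦ̃ = (α_k + E·γ_k − γ_{k+1})·Φ̃ for all k = 1, …, g. -/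
open scoped BigOperators

/-- The Schrödinger operator `𝓛 f = ∂_x² f − u₁·f` on complex-valued functions. -/
noncomputable def opLC {g : ℕ} (u : ℕ → (Fin g → ℝ) → ℝ)
    (f : (Fin g → ℝ) → ℂ) : (Fin g → ℝ) → ℂ :=
  fun t => pd 1 (pd 1 f) t - u 1 t • f t

/-- `𝓐_k f = ∂_x²∂_k f − (1/2)(u₁·∂_k f + ∂_k(u₁·f)) − (1/4)(u_k·∂_x f + ∂_x(u_k·f))`
on complex-valued functions. -/
noncomputable def opAC {g : ℕ} (u : ℕ → (Fin g → ℝ) → ℝ) (k : ℕ)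
    (f : (Fin g → ℝ) → ℂ) : (Fin g → ℝ) → ℂ :=
  fun t => pd 1 (pd 1 (pd k f)) t
    - (1/2 : ℝ) • (u 1 t • pd k f t + pd k (fun s => u 1 s • f s) t)
    - (1/4 : ℝ) • (u k t • pd 1 f t + pd 1 (fun s => u k s • f s) t)

/-- `𝓤_k f = 𝓐_k f − ∂_{k+1} f` on complex-valued functions. -/
noncomputable def opUC {g : ℕ} (u : ℕ → (Fin g → ℝ) → ℝ) (k : ℕ)
    (f : (Fin g → ℝ) → ℂ) : (Fin g → ℝ) → ℂ :=
  fun t => opAC u k f t - pd (k+1) f t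

/-- The twisted function `Φ̃ = Φ·exp(γ_2 t_2 + … + γ_g t_g)`. -/
noncomputable def twist {g : ℕ} (γ : ℕ → ℂ) (Φ : (Fin g → ℝ) → ℂ) :
    (Fin g → ℝ) → ℂ :=
  fun t => Φ t * Complex.exp (∑ k ∈ Finset.Icc 2 g, γ k * (coord g k t : ℂ))

set_option maxHeartbeats 1000000

noncomputable def prj {g : ℕ} (j : Fin g) : (Fin g → ℝ) →L[ℝ] ℂ :=
  Complex.ofRealCLM.comp (ContinuousLinearMap.proj (R := ℝ) (φ := fun _ : Fin g => ℝ) j)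

lemma prj_apply {g : ℕ} (j : Fin g) (v : Fin g → ℝ) : prj j v = ((v j : ℝ) : ℂ) := by
  simp [prj]

lemma pd_contDiff {g : ℕ} {f : (Fin g → ℝ) → ℂ} (hf : ContDiff ℝ (⊤ : ℕ∞) f) (j : ℕ) :
    ContDiff ℝ (⊤ : ℕ∞) (pd j f) := by
  unfold pd
  by_cases h : 1 ≤ j ∧ j ≤ g
  · simp only [dif_pos h]
    exact (hf.fderiv_right (by exact_mod_cast le_refl (⊤ : ℕ∞))).clm_apply contDiff_const
  · simp only [dif_neg h]; exact contDiff_const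

lemma pd_mul' {g : ℕ} {f h : (Fin g → ℝ) → ℂ} {t : Fin g → ℝ}
    (hf : DifferentiableAt ℝ f t) (hh : DifferentiableAt ℝ h t) (j : ℕ) :
    pd j (fun s => f s * h s) t = pd j f t * h t + f t * pd j h t := by
  unfold pd
  by_cases hj : 1 ≤ j ∧ j ≤ g
  · simp only [dif_pos hj, fderiv_fun_mul hf hh, ContinuousLinearMap.add_apply,
      ContinuousLinearMap.smul_apply, smul_eq_mul]
    ring
  · simp [dif_neg hj]

lemma pd_add_mul {g : ℕ} {f h : (Fin g → ℝ) → ℂ} {t : Fin g → ℝ}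
    (hf : DifferentiableAt ℝ f t) (hh : DifferentiableAt ℝ h t) (c : ℂ) (j : ℕ) :
    pd j (fun s => f s + c * h s) t = pd j f t + c * pd j h t := by
  unfold pd
  by_cases hj : 1 ≤ j ∧ j ≤ g
  · simp only [dif_pos hj, fderiv_fun_add hf (hh.const_mul c),
      fderiv_const_mul hh c, ContinuousLinearMap.add_apply,
      ContinuousLinearMap.smul_apply, smul_eq_mul]
  · simp [dif_neg hj]

/-- Let `E, α_1, …, α_g, γ_2, …, γ_g` be complex constants with
`γ_1 = 0` and `γ_{g+1} = 0`. If a smooth `Φ` satisfies `𝓛Φ = E·Φ` and `𝓤_kΦ = α_k·Φ`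
for `k = 1, …, g`, then `Φ̃ = Φ·exp(γ_2 t_2 + … + γ_g t_g)` satisfies `𝓛Φ̃ = E·Φ̃` and
`𝓤_kΦ̃ = (α_k + E·γ_k − γ_{k+1})·Φ̃` for all `k = 1, …, g`. -/
theorem statement11 (g : ℕ) (hg : 1 ≤ g) (u : ℕ → (Fin g → ℝ) → ℝ)
    (hu : ∀ i, ContDiff ℝ (⊤ : ℕ∞) (u i))
    (E : ℂ) (α γ : ℕ → ℂ) (hγ1 : γ 1 = 0) (hγtop : γ (g+1) = 0)
    (Φ : (Fin g → ℝ) → ℂ) (hΦ : ContDiff ℝ (⊤ : ℕ∞) Φ)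
    (hL : ∀ t, opLC u Φ t = E * Φ t)
    (hU : ∀ k, 1 ≤ k → k ≤ g → ∀ t, opUC u k Φ t = α k * Φ t) :
    (∀ t, opLC u (twist γ Φ) t = E * twist γ Φ t)
    ∧ (∀ k, 1 ≤ k → k ≤ g → ∀ t,
        opUC u k (twist γ Φ) t = (α k + E * γ k - γ (k+1)) * twist γ Φ t) := by
  classical
  have h1le : ((⊤ : ℕ∞) : WithTop ℕ∞) ≠ 0 := by simp
  set idx : ℕ → Fin g := fun k => ⟨min (k-1) (g-1), by omega⟩ with hidx
  set γ' : ℕ → ℂ := fun j => if 2 ≤ j ∧ j ≤ g then γ j else 0 with hγ'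
  set e : (Fin g → ℝ) → ℂ :=
    fun t => Complex.exp (∑ k ∈ Finset.Icc 2 g, γ k * (coord g k t : ℂ)) with he_def
  have htw : twist γ Φ = fun s => Φ s * e s := rfl
  have hγ'1 : γ' 1 = 0 := by rw [hγ']; simp
  -- rewriting the phase sum without `coord`'s dite
  have hsum : (fun t : Fin g → ℝ => ∑ k ∈ Finset.Icc 2 g, γ k * (coord g k t : ℂ))
      = fun t => ∑ k ∈ Finset.Icc 2 g, γ k * ((t (idx k) : ℝ) : ℂ) := by
    funext t
    refine Finset.sum_congr rfl fun k hk => ?_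
    rw [Finset.mem_Icc] at hk
    have h1 : 1 ≤ k ∧ k ≤ g := ⟨by omega, hk.2⟩
    rw [coord, dif_pos h1]
    have : (⟨k-1, by omega⟩ : Fin g) = idx k := by
      apply Fin.ext; simp [hidx]; omega
    rw [this]
  set L : (Fin g → ℝ) →L[ℝ] ℂ :=
    ∑ k ∈ Finset.Icc 2 g, γ k • prj (idx k) with hL_def
  have hSd : ∀ t, HasFDerivAt
      (fun t : Fin g → ℝ => ∑ k ∈ Finset.Icc 2 g, γ k * (coord g k t : ℂ)) L t := by
    intro t
    rw [hsum]
    refine HasFDerivAt.fun_sum fun k _ => ?_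
    have h0 : HasFDerivAt (fun y : Fin g → ℝ => ((y (idx k) : ℝ) : ℂ)) (prj (idx k)) t := by
      refine HasFDerivAt.congr_of_eventuallyEq ((prj (idx k)).hasFDerivAt) ?_
      filter_upwards with y
      simp [prj]
    exact h0.const_mul (γ k)
  have hLapp : ∀ j, (hj : 1 ≤ j ∧ j ≤ g) →
      L (Pi.single (⟨j-1, by omega⟩ : Fin g) 1) = γ' j := by
    intro j hj
    rw [hL_def, ContinuousLinearMap.sum_apply]
    have hterm : ∀ k ∈ Finset.Icc 2 g,
        (γ k • prj (idx k)) (Pi.single (⟨j-1, by omega⟩ : Fin g) (1:ℝ))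
        = if k = j then γ k else 0 := by
      intro k hk
      rw [Finset.mem_Icc] at hk
      have hiff : (idx k = (⟨j-1, by omega⟩ : Fin g)) ↔ k = j := by
        rw [Fin.ext_iff]; simp [hidx]; omega
      simp only [ContinuousLinearMap.smul_apply, prj_apply, smul_eq_mul,
        Pi.single_apply, hiff]
      split_ifs <;> simp
    rw [Finset.sum_congr rfl hterm, Finset.sum_ite_eq' (Finset.Icc 2 g) j γ]
    rw [hγ']
    simp only [Finset.mem_Icc]
  have hγ'0 : ∀ j, ¬(1 ≤ j ∧ j ≤ g) → γ' j = 0 := by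
    intro j hj; rw [hγ']; simp only; rw [if_neg (by omega)]
  have hpde : ∀ j t, pd j e t = γ' j * e t := by
    intro j t
    by_cases hj : 1 ≤ j ∧ j ≤ g
    · have hE : HasFDerivAt e ((e t) • L) t := (hSd t).cexp
      rw [pd, dif_pos hj, hE.fderiv, ContinuousLinearMap.smul_apply, hLapp j hj]
      try rw [smul_eq_mul]
      try ring
    · rw [pd, dif_neg hj, hγ'0 j hj, zero_mul]
  have he : ContDiff ℝ (⊤ : ℕ∞) e := by
    have h : e = fun t => Complex.exp (∑ k ∈ Finset.Icc 2 g, γ k * ((t (idx k) : ℝ) : ℂ)) := by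
      funext t; rw [he_def]; exact congrArg Complex.exp (congrFun hsum t)
    rw [h]
    refine (ContDiff.sum fun k _ => contDiff_const.mul ?_).cexp
    have heq : (fun t : Fin g → ℝ => ((t (idx k) : ℝ) : ℂ)) = ⇑(prj (idx k)) :=
      funext fun v => (prj_apply _ _).symm
    rw [heq]
    exact (prj (idx k)).contDiff
  have hed : Differentiable ℝ e := he.differentiable h1le
  have hΦd : Differentiable ℝ Φ := hΦ.differentiable h1le
  -- first-order product rule with the phase
  have keyj : ∀ (f : (Fin g → ℝ) → ℂ), Differentiable ℝ f → ∀ j t,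
      pd j (fun s => f s * e s) t = (pd j f t + γ' j * f t) * e t := by
    intro f hf j t
    rw [pd_mul' (hf t) (hed t) j, hpde j t]
    ring
  -- second-order
  have key2 : ∀ (f : (Fin g → ℝ) → ℂ), ContDiff ℝ (⊤ : ℕ∞) f → ∀ t,
      pd 1 (pd 1 (fun s => f s * e s)) t = pd 1 (pd 1 f) t * e t := by
    intro f hf t
    have hfd := hf.differentiable h1le
    have h1 : pd 1 (fun s => f s * e s) = fun s => (pd 1 f s + γ' 1 * f s) * e s :=
      funext fun s => keyj f hfd 1 s
    rw [h1]
    have hf1 : ContDiff ℝ (⊤ : ℕ∞) (fun s => pd 1 f s + γ' 1 * f s) :=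
      (pd_contDiff hf 1).add (contDiff_const.mul hf)
    rw [keyj (fun s => pd 1 f s + γ' 1 * f s) (hf1.differentiable h1le) 1 t,
      pd_add_mul ((pd_contDiff hf 1).differentiable h1le t) (hfd t) (γ' 1) 1, hγ'1]
    ring
  -- third-order
  have key3 : ∀ (f : (Fin g → ℝ) → ℂ), ContDiff ℝ (⊤ : ℕ∞) f → ∀ j t,
      pd 1 (pd 1 (pd j (fun s => f s * e s))) t
        = (pd 1 (pd 1 (pd j f)) t + γ' j * pd 1 (pd 1 f) t) * e t := by
    intro f hf j t
    have hfd := hf.differentiable h1le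
    have h1 : pd j (fun s => f s * e s) = fun s => (pd j f s + γ' j * f s) * e s :=
      funext fun s => keyj f hfd j s
    rw [h1]
    have hF : ContDiff ℝ (⊤ : ℕ∞) (fun s => pd j f s + γ' j * f s) :=
      (pd_contDiff hf j).add (contDiff_const.mul hf)
    rw [key2 (fun s => pd j f s + γ' j * f s) hF t]
    have h2 : pd 1 (fun s => pd j f s + γ' j * f s)
        = fun s => pd 1 (pd j f) s + γ' j * pd 1 f s :=
      funext fun s => pd_add_mul ((pd_contDiff hf j).differentiable h1le s) (hfd s) (γ' j) 1
    rw [h2, pd_add_mul ((pd_contDiff (pd_contDiff hf j) 1).differentiable h1le t)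
        ((pd_contDiff hf 1).differentiable h1le t) (γ' j) 1]
  refine ⟨?_, ?_⟩
  · intro t
    have hLt := hL t
    simp only [opLC] at hLt ⊢
    simp only [htw]
    rw [key2 Φ hΦ t]
    simp only [Complex.real_smul] at hLt ⊢
    linear_combination e t * hLt
  · intro k hk1 hk2 t
    have hUt := hU k hk1 hk2 t
    have hLt := hL t
    simp only [opUC, opAC, opLC] at hUt hLt ⊢
    simp only [htw]
    have hγk : γ' k = γ k := by
      rcases Nat.lt_or_ge k 2 with h | h
      · have hk : k = 1 := by omega
        subst hk; rw [hγ'1, hγ1]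
      · rw [hγ']; simp only; rw [if_pos ⟨h, hk2⟩]
    have hγk1 : γ' (k+1) = γ (k+1) := by
      by_cases h : k + 1 ≤ g
      · rw [hγ']; simp only; rw [if_pos ⟨by omega, h⟩]
      · have hk : k + 1 = g + 1 := by omega
        rw [hk, hγ'0 (g+1) (by omega), hγtop]
    have r1 := key3 Φ hΦ k t
    have r2 := keyj Φ hΦd k t
    have r3 : pd k (fun s => u 1 s • (Φ s * e s)) t
        = (pd k (fun s => u 1 s • Φ s) t + γ' k * (u 1 t • Φ t)) * e t := by
      have hrw : (fun s => u 1 s • (Φ s * e s)) = fun s => (u 1 s • Φ s) * e s :=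
        funext fun s => (smul_mul_assoc _ _ _).symm
      rw [hrw]
      exact keyj (fun s => u 1 s • Φ s) (((hu 1).smul hΦ).differentiable h1le) k t
    have r4 : pd 1 (fun s => u k s • (Φ s * e s)) t
        = (pd 1 (fun s => u k s • Φ s) t + γ' 1 * (u k t • Φ t)) * e t := by
      have hrw : (fun s => u k s • (Φ s * e s)) = fun s => (u k s • Φ s) * e s :=
        funext fun s => (smul_mul_assoc _ _ _).symm
      rw [hrw]
      exact keyj (fun s => u k s • Φ s) (((hu k).smul hΦ).differentiable h1le) 1 t
    have r5 := keyj Φ hΦd 1 t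
    have r6 := keyj Φ hΦd (k+1) t
    rw [r1, r2, r3, r4, r5, r6]
    simp only [hγ'1, hγk, hγk1]
    simp only [Complex.real_smul, Complex.ofReal_div, Complex.ofReal_one,
      Complex.ofReal_ofNat] at hUt hLt ⊢
    linear_combination e t * hUt + γ k * e t * hLt
end

section
/- Fix a real ξ ≠ 0 and real constants α_1, …, α_g, and set α(ξ) = ∑_{i=1}^g α_i ξ^i. Assume that at every point t ∈ ℝ^g one has 16·α(ξ)² = 𝐮'(ξ)² + 2𝐮''(ξ)(2 − 𝐮(ξ)) + 4(ξ⁻¹ + u_1)(2 − 𝐮(ξ))². Then on the open set where 2 − 𝐮(ξ) ≠ 0, the function χ := (4α(ξ) − 𝐮'(ξ))/(2(2 − 𝐮(ξ))) satisfies the Riccati equation ∂_xχ + χ² = u_1 + ξ⁻¹. -/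
open scoped BigOperators

/-- The generating function `𝐮(ξ) = ∑_{i=1}^g u_i ξ^i`. -/
noncomputable def bfu {g : ℕ} (u : ℕ → (Fin g → ℝ) → ℝ) (ξ : ℝ) :
    (Fin g → ℝ) → ℝ :=
  fun t => ∑ i ∈ Finset.Icc 1 g, u i t * ξ ^ i

/-- `𝐮'(ξ) = ∑_{i=1}^g u_i' ξ^i` (prime is `∂_x = ∂_1`). -/
noncomputable def bfu1 {g : ℕ} (u : ℕ → (Fin g → ℝ) → ℝ) (ξ : ℝ) :
    (Fin g → ℝ) → ℝ :=
  fun t => ∑ i ∈ Finset.Icc 1 g, pd 1 (u i) t * ξ ^ i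

/-- `𝐮''(ξ) = ∑_{i=1}^g u_i'' ξ^i`. -/
noncomputable def bfu2 {g : ℕ} (u : ℕ → (Fin g → ℝ) → ℝ) (ξ : ℝ) :
    (Fin g → ℝ) → ℝ :=
  fun t => ∑ i ∈ Finset.Icc 1 g, pd 1 (pd 1 (u i)) t * ξ ^ i

/-- `𝐮'''(ξ) = ∑_{i=1}^g u_i''' ξ^i`. -/
noncomputable def bfu3 {g : ℕ} (u : ℕ → (Fin g → ℝ) → ℝ) (ξ : ℝ) :
    (Fin g → ℝ) → ℝ :=
  fun t => ∑ i ∈ Finset.Icc 1 g, pd 1 (pd 1 (pd 1 (u i))) t * ξ ^ i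

/-- Fix real `ξ ≠ 0` and real constants `α_1, …, α_g`, with
`α(ξ) = ∑ α_i ξ^i`. If at every point `16·α(ξ)² = 𝐮'(ξ)² + 2𝐮''(ξ)(2 − 𝐮(ξ)) +
4(ξ⁻¹ + u_1)(2 − 𝐮(ξ))²`, then on the set where `2 − 𝐮(ξ) ≠ 0` the function
`χ = (4α(ξ) − 𝐮'(ξ))/(2(2 − 𝐮(ξ)))` satisfies the Riccati equation
`∂_xχ + χ² = u_1 + ξ⁻¹`. -/
theorem statement12 (g : ℕ) (hg : 1 ≤ g) (u : ℕ → (Fin g → ℝ) → ℝ)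
    (hu : ∀ i, ContDiff ℝ (⊤ : ℕ∞) (u i))
    (ξ : ℝ) (hξ : ξ ≠ 0) (α : ℕ → ℝ)
    (h4mu : ∀ t, 16 * (∑ i ∈ Finset.Icc 1 g, α i * ξ ^ i) ^ 2
      = bfu1 u ξ t ^ 2 + 2 * bfu2 u ξ t * (2 - bfu u ξ t)
        + 4 * (ξ⁻¹ + u 1 t) * (2 - bfu u ξ t) ^ 2) :
    ∀ t, 2 - bfu u ξ t ≠ 0 →
      pd 1 (fun s => (4 * (∑ i ∈ Finset.Icc 1 g, α i * ξ ^ i) - bfu1 u ξ s)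
          / (2 * (2 - bfu u ξ s))) t
        + ((4 * (∑ i ∈ Finset.Icc 1 g, α i * ξ ^ i) - bfu1 u ξ t)
          / (2 * (2 - bfu u ξ t))) ^ 2
      = u 1 t + ξ⁻¹ := by
  intro t ht
  have hcond : 1 ≤ 1 ∧ 1 ≤ g := ⟨le_rfl, hg⟩
  set A : ℝ := ∑ i ∈ Finset.Icc 1 g, α i * ξ ^ i with hA
  set e : Fin g → ℝ := Pi.single (⟨0, by omega⟩ : Fin g) 1 with he
  have hpd_eq : ∀ (f : (Fin g → ℝ) → ℝ), pd 1 f = fun s => fderiv ℝ f s e := by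
    intro f
    unfold pd
    funext s
    rw [dif_pos hcond]
  have hsmooth : ∀ (f : (Fin g → ℝ) → ℝ), ContDiff ℝ (⊤ : ℕ∞) f →
      ContDiff ℝ (⊤ : ℕ∞) (pd 1 f) := by
    intro f hf
    rw [hpd_eq]
    exact (hf.fderiv_right (by exact_mod_cast le_top)).clm_apply contDiff_const
  have hder_u : ∀ i : ℕ, HasFDerivAt (u i) (fderiv ℝ (u i) t) t :=
    fun i => ((hu i).differentiable (by simp) t).hasFDerivAt
  have hder_pu : ∀ i : ℕ, HasFDerivAt (pd 1 (u i)) (fderiv ℝ (pd 1 (u i)) t) t :=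
    fun i => ((hsmooth (u i) (hu i)).differentiable (by simp) t).hasFDerivAt
  have hderb : HasFDerivAt (bfu u ξ)
      (∑ i ∈ Finset.Icc 1 g, ξ ^ i • fderiv ℝ (u i) t) t :=
    HasFDerivAt.fun_sum (fun i _ => (hder_u i).mul_const _)
  have hderb1 : HasFDerivAt (bfu1 u ξ)
      (∑ i ∈ Finset.Icc 1 g, ξ ^ i • fderiv ℝ (pd 1 (u i)) t) t :=
    HasFDerivAt.fun_sum (fun i _ => (hder_pu i).mul_const _)
  have hNe : (∑ i ∈ Finset.Icc 1 g, ξ ^ i • fderiv ℝ (u i) t) e = bfu1 u ξ t := by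
    simp only [ContinuousLinearMap.coe_sum', Finset.sum_apply,
      ContinuousLinearMap.coe_smul', Pi.smul_apply, smul_eq_mul, bfu1, hpd_eq]
    exact Finset.sum_congr rfl (fun i _ => mul_comm _ _)
  have hN1e : (∑ i ∈ Finset.Icc 1 g, ξ ^ i • fderiv ℝ (pd 1 (u i)) t) e
      = bfu2 u ξ t := by
    simp only [ContinuousLinearMap.coe_sum', Finset.sum_apply,
      ContinuousLinearMap.coe_smul', Pi.smul_apply, smul_eq_mul, bfu2, hpd_eq]
    exact Finset.sum_congr rfl (fun i _ => mul_comm _ _)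
  have hDne : (2 : ℝ) * (2 - bfu u ξ t) ≠ 0 := mul_ne_zero two_ne_zero ht
  have hN : HasFDerivAt (fun s => 4 * A - bfu1 u ξ s)
      ((0 : (Fin g → ℝ) →L[ℝ] ℝ) - ∑ i ∈ Finset.Icc 1 g, ξ ^ i • fderiv ℝ (pd 1 (u i)) t) t :=
    (hasFDerivAt_const (4 * A) t).sub hderb1
  have hD : HasFDerivAt (fun s => 2 * (2 - bfu u ξ s))
      ((2 : ℝ) • ((0 : (Fin g → ℝ) →L[ℝ] ℝ) - ∑ i ∈ Finset.Icc 1 g, ξ ^ i • fderiv ℝ (u i) t)) t :=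
    ((hasFDerivAt_const (2 : ℝ) t).sub hderb).const_mul 2
  have hInv : HasFDerivAt (fun s => (2 * (2 - bfu u ξ s))⁻¹)
      ((ContinuousLinearMap.smulRight (1 : ℝ →L[ℝ] ℝ)
          (-((2 * (2 - bfu u ξ t)) ^ 2)⁻¹)).comp
        ((2 : ℝ) • ((0 : (Fin g → ℝ) →L[ℝ] ℝ) - ∑ i ∈ Finset.Icc 1 g, ξ ^ i • fderiv ℝ (u i) t))) t :=
    (hasFDerivAt_inv hDne).comp t hD
  have hχ : HasFDerivAt
      (fun s => (4 * A - bfu1 u ξ s) / (2 * (2 - bfu u ξ s)))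
      ((4 * A - bfu1 u ξ t) •
          ((ContinuousLinearMap.smulRight (1 : ℝ →L[ℝ] ℝ)
              (-((2 * (2 - bfu u ξ t)) ^ 2)⁻¹)).comp
            ((2 : ℝ) • ((0 : (Fin g → ℝ) →L[ℝ] ℝ) - ∑ i ∈ Finset.Icc 1 g, ξ ^ i • fderiv ℝ (u i) t)))
        + (2 * (2 - bfu u ξ t))⁻¹ •
          ((0 : (Fin g → ℝ) →L[ℝ] ℝ) - ∑ i ∈ Finset.Icc 1 g, ξ ^ i • fderiv ℝ (pd 1 (u i)) t)) t := by
    simp only [div_eq_mul_inv]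
    exact hN.mul hInv
  rw [hpd_eq]
  beta_reduce
  rw [hχ.fderiv]
  simp only [ContinuousLinearMap.add_apply, ContinuousLinearMap.smul_apply,
    ContinuousLinearMap.comp_apply, ContinuousLinearMap.smulRight_apply,
    ContinuousLinearMap.one_apply, ContinuousLinearMap.sub_apply,
    ContinuousLinearMap.zero_apply, smul_eq_mul, hNe, hN1e]
  have key := h4mu t
  rw [inv_eq_one_div] at key
  field_simp at key
  field_simp
  linear_combination key
end

section
/- Let f, h : ℝ → ℝ be differentiable at a point ξ. Then the limit as η → ξ (η ≠ ξ) of 𝓑(f, h)(ξ, η) := (ξη/(2(ξ−η)))·(f(ξ)h(η) − f(η)h(ξ)) exists and equals (ξ²/2)·(f'(ξ)h(ξ) − f(ξ)h'(ξ)) = (ξ²/2)·H_ξ[f, h], where H_ξ[f, h] = f'h − fh' is the Hirota operator. In particular (2/(ξη))·𝓑(f, h)(ξ, η) is a polarization of the Hirota operator. -/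
/-- If `f, h : ℝ → ℝ` are differentiable at `ξ`, then the limit as
`η → ξ` (`η ≠ ξ`) of `𝓑(f, h)(ξ, η) = (ξη/(2(ξ−η)))·(f(ξ)h(η) − f(η)h(ξ))` exists and
equals `(ξ²/2)·(f'(ξ)h(ξ) − f(ξ)h'(ξ)) = (ξ²/2)·H_ξ[f, h]`, where `H_ξ[f, h] = f'h − fh'`
is the Hirota operator. In particular `(2/(ξη))·𝓑(f, h)(ξ, η)` is a polarization of
the Hirota operator. -/
theorem statement15 (f h : ℝ → ℝ) (ξ : ℝ)
    (hf : DifferentiableAt ℝ f ξ) (hh : DifferentiableAt ℝ h ξ) :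
    Filter.Tendsto (fun η => ξ * η / (2 * (ξ - η)) * (f ξ * h η - f η * h ξ))
      (nhdsWithin ξ {ξ}ᶜ)
      (nhds (ξ ^ 2 / 2 * (deriv f ξ * h ξ - f ξ * deriv h ξ))) := by
  have hg : HasDerivAt (fun η => f ξ * h η - f η * h ξ)
      (f ξ * deriv h ξ - deriv f ξ * h ξ) ξ := by
    have := (hh.hasDerivAt.const_mul (f ξ)).sub (hf.hasDerivAt.mul_const (h ξ)); exact this
  have hslope := hasDerivAt_iff_tendsto_slope.mp hg
  have hc : Filter.Tendsto (fun η : ℝ => -(ξ * η) / 2) (nhdsWithin ξ {ξ}ᶜ)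
      (nhds (-(ξ * ξ) / 2)) := by
    apply Filter.Tendsto.mono_left _ nhdsWithin_le_nhds
    exact (((continuous_const.mul continuous_id).neg.div_const 2).tendsto ξ)
  have hmul := hc.mul hslope
  have heq : ∀ η ∈ ({ξ}ᶜ : Set ℝ),
      (fun η : ℝ => -(ξ * η) / 2) η * slope (fun η => f ξ * h η - f η * h ξ) ξ η
        = ξ * η / (2 * (ξ - η)) * (f ξ * h η - f η * h ξ) := by
    intro η hη
    have hne : η - ξ ≠ 0 := sub_ne_zero.mpr (by simpa using hη)
    have hne' : ξ - η ≠ 0 := fun hc => hne (by linarith [sub_eq_zero.mp hc])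
    simp only [slope_def_field, div_eq_inv_mul]
    field_simp
    ring
  have hfinal := hmul.congr' (Filter.eventuallyEq_of_mem self_mem_nhdsWithin heq)
  convert hfinal using 2
  ring
end
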